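/- Let k ≥ 4 be an even integer and set p := k − 2 (even). Let {v_1,…,v_n} be an orthonormal basis of ℝ^n and suppose κ_r < 0 and λ_r ≤ 0 for every r = 1,…,n. Then convergence is global: every differentiable solution x : [0,∞) → ℝ^n of ẋ(t) = Σ_{r=1}^n (κ_r·⟨v_r, x(t)⟩ + λ_r·⟨v_r, x(t)⟩^{k-1})·v_r satisfies x(t) → 0 as t → ∞, for every initial condition x(0) ∈ ℝ^n. -/

import Mathlib

open Filter Real

lemma coord_tendsto (k : ℕ) (hk : 4 ≤ k) (hke : Even k)
    (a l : ℝ) (ha : a < 0) (hl : l ≤ 0) (c : ℝ → ℝ)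
    (hc : ∀ t : ℝ, 0 ≤ t → HasDerivAt c (a * c t + l * c t ^ (k - 1)) t) :
    Tendsto c atTop (nhds 0) := by
  set g : ℝ → ℝ := fun t => c t ^ 2 * Real.exp (-(2 * a) * t) with hg
  have hk1 : 1 ≤ k - 1 := by omega
  have hgd : ∀ t : ℝ, 0 ≤ t →
      HasDerivAt g ((2 * l * c t ^ k) * Real.exp (-(2 * a) * t)) t := by
    intro t ht
    have h1 : HasDerivAt (fun t => c t ^ 2)
        (2 * c t * (a * c t + l * c t ^ (k - 1))) t := by
      simpa using! ((hc t ht).pow 2)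
    have h2 : HasDerivAt (fun t => Real.exp (-(2 * a) * t))
        (-(2 * a) * Real.exp (-(2 * a) * t)) t := by
      simpa [mul_comm] using ((hasDerivAt_id t).const_mul (-(2 * a))).exp
    have := h1.mul h2
    refine this.congr_deriv ?_
    have hck : c t * c t ^ (k - 1) = c t ^ k := by
      nth_rewrite 1 [← pow_one (c t)]
      rw [← pow_add]
      congr 1
      omega
    rw [← hck]
    ring
  have hcont : ContinuousOn g (Set.Ici 0) := fun t ht =>
    ((hgd t ht).continuousAt).continuousWithinAt
  have hanti : AntitoneOn g (Set.Ici 0) := by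
    apply antitoneOn_of_deriv_nonpos (convex_Ici 0) hcont
    · intro t ht
      rw [interior_Ici] at ht
      exact ((hgd t (le_of_lt ht)).differentiableAt).differentiableWithinAt
    · intro t ht
      rw [interior_Ici] at ht
      rw [(hgd t (le_of_lt ht)).deriv]
      have h1 : 0 ≤ c t ^ k * Real.exp (-(2 * a) * t) :=
        mul_nonneg (hke.pow_nonneg _) (Real.exp_pos _).le
      have h2 : l * (c t ^ k * Real.exp (-(2 * a) * t)) ≤ 0 :=
        mul_nonpos_of_nonpos_of_nonneg hl h1
      have h3 : 2 * l * c t ^ k * Real.exp (-(2 * a) * t)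
          = 2 * (l * (c t ^ k * Real.exp (-(2 * a) * t))) := by ring
      rw [h3]; linarith
  have hbound : ∀ t : ℝ, 0 ≤ t → |c t| ≤ |c 0| * Real.exp (a * t) := by
    intro t ht
    have h := hanti (Set.self_mem_Ici) ht ht
    have hg0 : g 0 = c 0 ^ 2 := by simp [hg]
    have hgt : g t = c t ^ 2 * Real.exp (-(2 * a) * t) := rfl
    have hexp : (0:ℝ) < Real.exp (-(2 * a) * t) := Real.exp_pos _
    have h2 : c t ^ 2 ≤ c 0 ^ 2 * Real.exp (2 * a * t) := by
      have := h
      rw [hg0, hgt] at this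
      have h3 : c t ^ 2 ≤ c 0 ^ 2 / Real.exp (-(2 * a) * t) := by
        rw [le_div_iff₀ hexp]; exact this
      calc c t ^ 2 ≤ c 0 ^ 2 / Real.exp (-(2 * a) * t) := h3
        _ = c 0 ^ 2 * Real.exp (2 * a * t) := by
            rw [div_eq_mul_inv, ← Real.exp_neg]; ring_nf
    have h4 : c 0 ^ 2 * Real.exp (2 * a * t) = (|c 0| * Real.exp (a * t)) ^ 2 := by
      rw [mul_pow, sq_abs, sq (Real.exp (a * t)), ← Real.exp_add]
      ring_nf
    have h5 : c t ^ 2 ≤ (|c 0| * Real.exp (a * t)) ^ 2 := h4 ▸ h2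
    have h6 : 0 ≤ |c 0| * Real.exp (a * t) :=
      mul_nonneg (abs_nonneg _) (Real.exp_pos _).le
    calc |c t| = Real.sqrt (c t ^ 2) := (Real.sqrt_sq_eq_abs _).symm
      _ ≤ Real.sqrt ((|c 0| * Real.exp (a * t)) ^ 2) := Real.sqrt_le_sqrt h5
      _ = |c 0| * Real.exp (a * t) := by rw [Real.sqrt_sq h6]
  have hexp0 : Tendsto (fun t : ℝ => |c 0| * Real.exp (a * t)) atTop (nhds 0) := by
    have h1 : Tendsto (fun t : ℝ => a * t) atTop atBot :=
      tendsto_id.const_mul_atTop_of_neg ha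
    have h2 : Tendsto (fun t : ℝ => Real.exp (a * t)) atTop (nhds 0) :=
      Real.tendsto_exp_atBot.comp h1
    simpa using h2.const_mul (|c 0|)
  have hexp0' : Tendsto (fun t : ℝ => -(|c 0| * Real.exp (a * t))) atTop (nhds 0) := by
    simpa using hexp0.neg
  refine tendsto_of_tendsto_of_tendsto_of_le_of_le' hexp0' hexp0 ?_ ?_
  · filter_upwards [eventually_ge_atTop (0:ℝ)] with t ht
    exact (abs_le.mp (hbound t ht)).1
  · filter_upwards [eventually_ge_atTop (0:ℝ)] with t ht
    exact (abs_le.mp (hbound t ht)).2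

theorem stmt_10 (k n : ℕ) (hk : 4 ≤ k) (hke : Even k)
    (v : OrthonormalBasis (Fin n) ℝ (EuclideanSpace ℝ (Fin n)))
    (κ lam : Fin n → ℝ) (hκ : ∀ r, κ r < 0) (hlam : ∀ r, lam r ≤ 0)
    (x : ℝ → EuclideanSpace ℝ (Fin n))
    (hx : ∀ t : ℝ, 0 ≤ t →
      HasDerivAt x
        (∑ r, (κ r * (inner ℝ (v r) (x t) : ℝ)
          + lam r * (inner ℝ (v r) (x t) : ℝ) ^ (k - 1)) • v r) t) :
    Filter.Tendsto x Filter.atTop (nhds 0) := by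
  set c : Fin n → ℝ → ℝ := fun r t => (inner ℝ (v r) (x t) : ℝ) with hcdef
  have hon := v.orthonormal
  have hinner : ∀ r s : Fin n, (inner ℝ (v r) (v s) : ℝ) = if r = s then 1 else 0 := by
    intro r s
    rcases orthonormal_iff_ite.mp hon r s with h
    exact h
  have hcderiv : ∀ r, ∀ t : ℝ, 0 ≤ t →
      HasDerivAt (c r) (κ r * c r t + lam r * c r t ^ (k - 1)) t := by
    intro r t ht
    have h := (hasDerivAt_const t (v r)).inner ℝ (hx t ht)
    simp only [inner_zero_left, add_zero] at h
    refine h.congr_deriv ?_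
    rw [inner_sum]
    simp only [real_inner_smul_right, hinner, mul_ite, mul_one, mul_zero,
      Finset.sum_ite_eq, Finset.mem_univ, if_true]
    rfl
  have hctend : ∀ r, Tendsto (c r) atTop (nhds 0) := fun r =>
    coord_tendsto k hk hke (κ r) (lam r) (hκ r) (hlam r) (c r) (hcderiv r)
  have hxeq : ∀ t, x t = ∑ r, c r t • v r := by
    intro t
    rw [← v.sum_repr (x t)]
    congr 1
    ext r
    rw [v.repr_apply_apply]
  have : Tendsto (fun t => ∑ r, c r t • v r) atTop (nhds 0) := by
    have : Tendsto (fun t => ∑ r, c r t • v r) atTop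
        (nhds (∑ r : Fin n, (0:ℝ) • v r)) :=
      tendsto_finset_sum _ (fun r _ => (hctend r).smul_const (v r))
    simpa using this
  exact this.congr (fun t => (hxeq t).symm)
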